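/- Let Q be a well-founded poset and let P be a subset of I_{<ω}(Q) closed under binary union (a join-subsemilattice of I_{<ω}(Q)), ordered by inclusion. Then J(P), ordered by inclusion, is well-founded if and only if P has no infinite antichain. -/

import Mathlib

open Set

/-- The poset `Ω(ω*)`: pairs `(i,j)` of naturals with `i < j`,
ordered by `(i,j) ≤ (i',j')` iff `i' ≤ i ∧ j ≤ j'`. We only need the carrier and the join. -/
abbrev OmegaStar : Type := {p : ℕ × ℕ // p.1 < p.2}

/-- The join in `Ω(ω*)`: `(i,j) ⊔ (i',j') = (min i i', max j j')`. -/
def omegaJoin (a b : OmegaStar) : OmegaStar :=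
  ⟨(min a.1.1 b.1.1, max a.1.2 b.1.2),
    lt_of_le_of_lt (min_le_left _ _) (lt_of_lt_of_le a.2 (le_max_left _ _))⟩

/-- `Ω̲(ω*)`: `Ω(ω*)` with a new least element (`none`) adjoined. -/
abbrev OmegaStarBot : Type := Option OmegaStar

/-- The join in `Ω̲(ω*)`. -/
def omegaBotJoin : OmegaStarBot → OmegaStarBot → OmegaStarBot
  | none, b => b
  | a, none => a
  | some a, some b => some (omegaJoin a b)

/-- `I_{<ω}(Q)`: the finitely generated initial segments of `Q`,
i.e. downward closures of finite subsets of `Q` (including `∅`). -/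
def FinGenInit (Q : Type*) [Preorder Q] : Set (Set Q) :=
  {S | ∃ F : Finset Q, S = {x | ∃ y ∈ F, x ≤ y}}

/-- An ideal of a poset: a nonempty, up-directed, downward closed subset. -/
def IsIdeal {P : Type*} [Preorder P] (I : Set P) : Prop :=
  I.Nonempty ∧ (∀ x ∈ I, ∀ y ∈ I, ∃ z ∈ I, x ≤ z ∧ y ≤ z) ∧
    ∀ x y : P, x ≤ y → y ∈ I → x ∈ I

/-- A completely meet-irreducible ideal: an ideal `I` for which there is an ideal `J ⊋ I`
contained in every ideal strictly containing `I`. -/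
def CMIdeal {P : Type*} [Preorder P] (I : Set P) : Prop :=
  IsIdeal I ∧ ∃ J : Set P, IsIdeal J ∧ I ⊂ J ∧ ∀ K : Set P, IsIdeal K → I ⊂ K → J ⊆ K

/-- An ideal of a sub-poset `P` of `α`: a subset of `P`, nonempty, up-directed,
downward closed within `P`. -/
def IsIdealIn {α : Type*} [Preorder α] (P I : Set α) : Prop :=
  I ⊆ P ∧ I.Nonempty ∧ (∀ x ∈ I, ∀ y ∈ I, ∃ z ∈ I, x ≤ z ∧ y ≤ z) ∧
    ∀ x ∈ P, ∀ y ∈ I, x ≤ y → x ∈ I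

/-- A completely meet-irreducible ideal of the sub-poset `P`. -/
def CMIdealIn {α : Type*} [Preorder α] (P I : Set α) : Prop :=
  IsIdealIn P I ∧ ∃ J : Set α, IsIdealIn P J ∧ I ⊂ J ∧
    ∀ K : Set α, IsIdealIn P K → I ⊂ K → J ⊆ K

/-- `{x} ∨ J`, the ideal `{z : z ≤ x ⊔ y for some y ∈ J}`. -/
def JoinUp {P : Type*} [SemilatticeSup P] (x : P) (J : Set P) : Set P :=
  {z | ∃ y ∈ J, z ≤ x ⊔ y}

/-- A nonempty chain `𝓘` of ideals is separating if for every `I ∈ 𝓘` with `I ≠ ⋃𝓘` and every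
`x ∈ ⋃𝓘 \ I` there is `J ∈ 𝓘` with `I ⊄ {x} ∨ J`. -/
def Separating {P : Type*} [SemilatticeSup P] (𝓘 : Set (Set P)) : Prop :=
  ∀ I ∈ 𝓘, I ≠ ⋃₀ 𝓘 → ∀ x ∈ (⋃₀ 𝓘) \ I, ∃ J ∈ 𝓘, ¬ I ⊆ JoinUp x J

/-- An independent subset of a join-semilattice: no member is below the join of finitely many
of the others. -/
def IndepSet {P : Type*} [SemilatticeSup P] (X : Set P) : Prop :=
  ∀ x ∈ X, ∀ F : Finset P, ∀ hF : F.Nonempty, ↑F ⊆ X \ {x} → ¬ x ≤ F.sup' hF id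

/-- `ℱ^{<ω}`: unions of finite subfamilies of `ℱ` (including `∅`). -/
def finUnions {α : Type*} (ℱ : Set (Set α)) : Set (Set α) :=
  {S | ∃ G : Finset (Set α), ↑G ⊆ ℱ ∧ S = ⋃₀ ↑G}

/-- `ℱ^∪`: unions of arbitrary subfamilies of `ℱ`. -/
def arbUnions {α : Type*} (ℱ : Set (Set α)) : Set (Set α) :=
  {S | ∃ G ⊆ ℱ, S = ⋃₀ G}

/-! ### Auxiliary development -/

section Aux

/-- One step of the Dershowitz–Manna multiset order: replace one element by
finitely many smaller ones. -/
def OneStep {α : Type*} (r : α → α → Prop) (N M : Multiset α) : Prop :=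
  ∃ X a K, M = a ::ₘ X ∧ N = X + K ∧ ∀ k ∈ K, r k a

private theorem no_descending {α : Type*} {R : α → α → Prop} (wf : WellFounded R)
    (g : ℕ → α) (h : ∀ n, R (g (n + 1)) (g n)) : False := by
  obtain ⟨m, hm, hmin⟩ := wf.has_min (Set.range g) ⟨g 0, 0, rfl⟩
  obtain ⟨n, rfl⟩ := hm
  exact hmin (g (n + 1)) ⟨n + 1, rfl⟩ (h n)

private theorem acc_add_K {α : Type*} (r : α → α → Prop) (a : α)
    (ha : ∀ b, r b a → ∀ M, Acc (OneStep r) M → Acc (OneStep r) (b ::ₘ M))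
    (M : Multiset α) (hM : Acc (OneStep r) M) :
    ∀ K : Multiset α, (∀ k ∈ K, r k a) → Acc (OneStep r) (M + K) := by
  intro K
  induction K using Multiset.induction with
  | empty => intro _; simpa using hM
  | cons k K ih =>
    intro hk
    have h1 : Acc (OneStep r) (M + K) := ih fun x hx => hk x (Multiset.mem_cons_of_mem hx)
    have h2 := ha k (hk k (Multiset.mem_cons_self _ _)) _ h1
    rwa [Multiset.add_cons]

private theorem acc_cons {α : Type*} (r : α → α → Prop) (wf : WellFounded r) :
    ∀ a (M : Multiset α), Acc (OneStep r) M → Acc (OneStep r) (a ::ₘ M) := by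
  intro a
  induction a using WellFounded.induction wf with
  | _ a iha =>
    intro M hM
    induction hM with
    | intro M hMacc ihM =>
      constructor
      intro N hN
      obtain ⟨X, a', K, hM1, rfl, hK⟩ := hN
      rcases Multiset.cons_eq_cons.mp hM1 with ⟨h1, h2⟩ | ⟨hne, cs, h1, h2⟩
      · subst h1; subst h2
        exact acc_add_K r a (fun b hb => iha b hb) _ ⟨_, hMacc⟩ K hK
      · subst h1; subst h2
        have hstep : OneStep r (cs + K) (a' ::ₘ cs) := ⟨cs, a', K, rfl, rfl, hK⟩
        have := ihM (cs + K) hstep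
        rwa [Multiset.cons_add]

theorem oneStep_wf {α : Type*} (r : α → α → Prop) (wf : WellFounded r) :
    WellFounded (OneStep r) := by
  constructor
  intro M
  induction M using Multiset.induction with
  | empty =>
    constructor
    intro N hN
    obtain ⟨X, b, K, h, -, -⟩ := hN
    exact absurd h.symm (Multiset.cons_ne_zero)
  | cons a M ih => exact acc_cons r wf a M ih

theorem transGen_oneStep {α : Type*} (r : α → α → Prop) :
    ∀ (Y X Z : Multiset α), Y ≠ 0 → (∀ z ∈ Z, ∃ y ∈ Y, r z y) →
      Relation.TransGen (OneStep r) (X + Z) (X + Y) := by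
  intro Y
  induction Y using Multiset.induction with
  | empty => intro X Z hY _; exact absurd rfl hY
  | cons y Y ih =>
    intro X Z _ hZ
    classical
    by_cases h0 : Y = 0
    · subst h0
      apply Relation.TransGen.single
      refine ⟨X, y, Z, by rw [Multiset.add_cons, add_zero], rfl, ?_⟩
      intro z hz
      obtain ⟨y', hy', hr⟩ := hZ z hz
      rw [Multiset.mem_cons] at hy'
      rcases hy' with rfl | hy'
      · exact hr
      · exact absurd hy' (by simp)
    · set Za := Z.filter (fun z => r z y) with hZa
      set Zb := Z.filter (fun z => ¬ r z y) with hZb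
      have h1 : OneStep r ((X + Za) + Y) (X + (y ::ₘ Y)) := by
        refine ⟨X + Y, y, Za, by rw [Multiset.add_cons], by rw [add_right_comm], ?_⟩
        intro k hk
        exact (Multiset.mem_filter.mp hk).2
      have h2 : Relation.TransGen (OneStep r) ((X + Za) + Zb) ((X + Za) + Y) := by
        refine ih (X + Za) Zb h0 ?_
        intro z hz
        obtain ⟨hzZ, hzr⟩ := Multiset.mem_filter.mp hz
        obtain ⟨y', hy', hr⟩ := hZ z hzZ
        rw [Multiset.mem_cons] at hy'
        rcases hy' with rfl | hy'
        · exact absurd hr hzr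
        · exact ⟨y', hy', hr⟩
      have h3 : (X + Za) + Zb = X + Z := by
        rw [add_assoc, hZa, hZb, Multiset.filter_add_not]
      exact Relation.TransGen.tail (h3 ▸ h2) h1

variable {Q : Type*} [PartialOrder Q]

/-- The downward closure of a finite set. -/
def dcl (F : Finset Q) : Set Q := {x | ∃ y ∈ F, x ≤ y}

theorem dcl_mono {F G : Finset Q} (h : F ⊆ G) : dcl F ⊆ dcl G := by
  rintro x ⟨y, hy, hxy⟩
  exact ⟨y, h hy, hxy⟩

theorem subset_dcl {F : Finset Q} {x : Q} (hx : x ∈ F) : x ∈ dcl F := ⟨x, hx, le_rfl⟩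

theorem dcl_downward {F : Finset Q} {x y : Q} (hxy : x ≤ y) (hy : y ∈ dcl F) : x ∈ dcl F := by
  obtain ⟨z, hz, hyz⟩ := hy
  exact ⟨z, hz, hxy.trans hyz⟩

/-- Every finitely generated initial segment is generated by a finite antichain. -/
theorem exists_antichain_gen {S : Set Q} (hS : S ∈ FinGenInit Q) :
    ∃ F : Finset Q, (∀ x ∈ F, ∀ y ∈ F, ¬ x < y) ∧ S = dcl F := by
  classical
  obtain ⟨F₀, rfl⟩ := hS
  refine ⟨F₀.filter (fun x => ∀ y ∈ F₀, ¬ x < y), ?_, ?_⟩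
  · intro x hx y hy
    exact (Finset.mem_filter.mp hx).2 y (Finset.mem_filter.mp hy).1
  · apply Set.Subset.antisymm
    · rintro x ⟨y₀, hy₀, hxy₀⟩
      have hne : (F₀.filter (fun z => y₀ ≤ z)).Nonempty :=
        ⟨y₀, Finset.mem_filter.mpr ⟨hy₀, le_rfl⟩⟩
      obtain ⟨m, hm, hmax⟩ := Finset.exists_maximal hne
      obtain ⟨hmF, hym⟩ := Finset.mem_filter.mp hm
      refine ⟨m, Finset.mem_filter.mpr ⟨hmF, ?_⟩, hxy₀.trans hym⟩
      intro y hy hlt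
      exact absurd (hmax (Finset.mem_filter.mpr ⟨hy, hym.trans hlt.le⟩) hlt.le) (not_le_of_gt hlt)
    · rintro x ⟨y, hy, hxy⟩
      exact ⟨y, (Finset.mem_filter.mp hy).1, hxy⟩

/-- Key Dershowitz–Manna step: a strict inclusion of finitely generated
downsets (with antichain generators on the smaller side) gives a DM descent. -/
theorem dm_step {F G : Finset Q} (hF : ∀ x ∈ F, ∀ y ∈ F, ¬ x < y)
    (hsub : dcl F ⊆ dcl G) (hne : dcl F ≠ dcl G) :
    Relation.TransGen (OneStep ((· < ·) : Q → Q → Prop)) F.val G.val := by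
  classical
  have d1 : Disjoint (F ∩ G) (F \ G) := by
    rw [Finset.disjoint_left]
    intro x hx hx'
    exact (Finset.mem_sdiff.mp hx').2 (Finset.mem_inter.mp hx).2
  have d2 : Disjoint (F ∩ G) (G \ F) := by
    rw [Finset.disjoint_left]
    intro x hx hx'
    exact (Finset.mem_sdiff.mp hx').2 (Finset.mem_inter.mp hx).1
  have e1 : (F ∩ G).disjUnion (F \ G) d1 = F := by
    ext x
    simp only [Finset.mem_disjUnion, Finset.mem_inter, Finset.mem_sdiff]
    tauto
  have e2 : (F ∩ G).disjUnion (G \ F) d2 = G := by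
    ext x
    simp only [Finset.mem_disjUnion, Finset.mem_inter, Finset.mem_sdiff]
    tauto
  have hFval : F.val = (F ∩ G).val + (F \ G).val := by
    conv_lhs => rw [← e1]
    rfl
  have hGval : G.val = (F ∩ G).val + (G \ F).val := by
    conv_lhs => rw [← e2]
    rfl
  rw [hFval, hGval]
  apply transGen_oneStep
  · intro h0
    have : G \ F = ∅ := Finset.val_eq_zero.mp h0
    have hGF : G ⊆ F := Finset.sdiff_eq_empty_iff_subset.mp this
    exact hne (Set.Subset.antisymm hsub (dcl_mono hGF))
  · intro z hz
    rw [Finset.mem_val, Finset.mem_sdiff] at hz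
    obtain ⟨hzF, hzG⟩ := hz
    obtain ⟨y, hyG, hzy⟩ := hsub (subset_dcl hzF)
    have hzy' : z < y := lt_of_le_of_ne hzy (fun h => hzG (h ▸ hyG))
    refine ⟨y, ?_, hzy'⟩
    rw [Finset.mem_val, Finset.mem_sdiff]
    exact ⟨hyG, fun hyF => hF z hzF y hyF hzy'⟩

/-- In a well-founded poset there is no strictly decreasing sequence of finitely
generated initial segments. -/
theorem no_descending_finGenInit (hQ : WellFounded ((· < ·) : Q → Q → Prop))
    (f : ℕ → Set Q) (hf : ∀ n, f n ∈ FinGenInit Q) (hdesc : ∀ n, f (n + 1) ⊂ f n) :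
    False := by
  have hch := fun n => exists_antichain_gen (hf n)
  choose F hFa hFe using hch
  have key : ∀ n, Relation.TransGen (OneStep ((· < ·) : Q → Q → Prop))
      (F (n + 1)).val (F n).val := by
    intro n
    have h := hdesc n
    rw [hFe n, hFe (n + 1)] at h
    exact dm_step (hFa (n + 1)) h.subset (h.ne)
  exact no_descending ((oneStep_wf _ hQ).transGen) (fun n => (F n).val) key

end Aux

/-- For a well-founded poset `Q` and a join-subsemilattice `P` of `I_{<ω}(Q)`,
the poset `J(P)` of ideals of `P` is well-founded iff `P` has no infinite antichain. -/
theorem ideals_wellFounded_iff_no_antichain {Q : Type*} [PartialOrder Q]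
    (hQ : WellFounded ((· < ·) : Q → Q → Prop)) (P : Set (Set Q))
    (hP : P ⊆ FinGenInit Q) (hcl : ∀ X ∈ P, ∀ Y ∈ P, X ∪ Y ∈ P) :
    WellFounded (fun I J : {I : Set (Set Q) // IsIdealIn P I} => I < J) ↔
      ∀ A : Set (Set Q), A ⊆ P → IsAntichain (· ⊆ ·) A → A.Finite := by
  classical
  constructor
  · -- well-founded ⟹ no infinite antichain
    intro hwf A hAP hA
    by_contra hfin
    rw [← Set.not_infinite, not_not] at hfin
    -- Step: from any infinite subfamily extract a member `a`, a point `x ∈ a`, and an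
    -- infinite subfamily avoiding `x`.
    have step : ∀ B : Set (Set Q), B.Infinite → B ⊆ A →
        ∃ (a : Set Q) (x : Q) (B' : Set (Set Q)),
          a ∈ B ∧ x ∈ a ∧ B' ⊆ B ∧ B'.Infinite ∧ ∀ b ∈ B', x ∉ b := by
      intro B hB hBA
      obtain ⟨a, ha⟩ := hB.nonempty
      obtain ⟨F, hFgen⟩ := hP (hAP (hBA ha))
      have hwit : ∀ b ∈ B \ {a}, ∃ y ∈ F, y ∉ b := by
        intro b hb
        obtain ⟨hbB, hba⟩ := hb
        have hne : a ≠ b := fun h => hba (by simp [h])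
        have h1 : ¬ a ⊆ b := hA (hBA ha) (hBA hbB) hne
        obtain ⟨q, hqa, hqb⟩ := Set.not_subset.mp h1
        rw [hFgen] at hqa
        obtain ⟨y, hyF, hqy⟩ := hqa
        refine ⟨y, hyF, fun hyb => hqb ?_⟩
        obtain ⟨Fb, hFb⟩ := hP (hAP (hBA hbB))
        rw [hFb] at hyb ⊢
        obtain ⟨g, hg, hyg⟩ := hyb
        exact ⟨g, hg, hqy.trans hyg⟩
      have hcov : (B \ {a}) ⊆ ⋃ y ∈ F, {b | y ∉ b ∧ b ∈ B \ {a}} := by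
        intro b hb
        obtain ⟨y, hy, hyb⟩ := hwit b hb
        exact Set.mem_biUnion hy ⟨hyb, hb⟩
      have hex : ∃ y ∈ F, {b | y ∉ b ∧ b ∈ B \ {a}}.Infinite := by
        by_contra h
        push_neg at h
        have hfin2 : (⋃ y ∈ F, {b | y ∉ b ∧ b ∈ B \ {a}}).Finite :=
          Set.Finite.biUnion F.finite_toSet fun y hy => h y hy
        have h3 : (B \ {a}).Finite := hfin2.subset hcov
        have h4 : B.Finite := by
          refine (h3.union (Set.finite_singleton a)).subset ?_
          intro b hb
          by_cases hba : b = a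
          · exact Or.inr (by simp [hba])
          · exact Or.inl ⟨hb, hba⟩
        exact hB h4
      obtain ⟨y, hyF, hyinf⟩ := hex
      refine ⟨a, y, {b | y ∉ b ∧ b ∈ B \ {a}}, ha, ?_, fun b hb => hb.2.1, hyinf,
        fun b hb => hb.1⟩
      rw [hFgen]; exact ⟨y, hyF, le_rfl⟩
    have step' : ∀ B : {B : Set (Set Q) // B.Infinite ∧ B ⊆ A},
        ∃ t : (Set Q × Q) × {B : Set (Set Q) // B.Infinite ∧ B ⊆ A},
          t.1.1 ∈ B.1 ∧ t.1.2 ∈ t.1.1 ∧ t.2.1 ⊆ B.1 ∧ ∀ b ∈ t.2.1, t.1.2 ∉ b := by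
      intro B
      obtain ⟨a, x, B', haB, hxa, hB'B, hB'inf, hout⟩ := step B.1 B.2.1 B.2.2
      exact ⟨((a, x), ⟨B', hB'inf, hB'B.trans B.2.2⟩), haB, hxa, hB'B, hout⟩
    choose nxt hn1 hn2 hn3 hn4 using step'
    set seq : ℕ → {B : Set (Set Q) // B.Infinite ∧ B ⊆ A} :=
      fun n => Nat.rec (motive := fun _ => {B : Set (Set Q) // B.Infinite ∧ B ⊆ A})
        ⟨A, hfin, subset_rfl⟩ (fun _ prev => (nxt prev).2) n with hseqdef
    have hseq : ∀ n, seq (n + 1) = (nxt (seq n)).2 := fun n => rfl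
    set a : ℕ → Set Q := fun n => (nxt (seq n)).1.1 with hadef
    set x : ℕ → Q := fun n => (nxt (seq n)).1.2 with hxdef
    have haB : ∀ n, a n ∈ (seq n).1 := fun n => hn1 (seq n)
    have hxa : ∀ n, x n ∈ a n := fun n => hn2 (seq n)
    have hsub : ∀ n, (seq (n + 1)).1 ⊆ (seq n).1 := fun n => by
      rw [hseq]; exact hn3 (seq n)
    have hout : ∀ n, ∀ b ∈ (seq (n + 1)).1, x n ∉ b := fun n b hb => by
      rw [hseq] at hb; exact hn4 (seq n) b hb
    have mono : ∀ n m, n ≤ m → (seq m).1 ⊆ (seq n).1 := by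
      intro n m h
      induction m with
      | zero => rw [Nat.le_zero.mp h]
      | succ m ih =>
        rcases Nat.lt_or_ge n (m + 1) with h' | h'
        · exact (hsub m).trans (ih (Nat.lt_succ_iff.mp h'))
        · rw [Nat.le_antisymm h h']
    have key : ∀ n m, n < m → x n ∉ a m := fun n m h =>
      hout n (a m) (mono (n + 1) m h (haB m))
    have haP : ∀ n, a n ∈ P := fun n => hAP ((seq n).2.2 (haB n))
    -- the strictly decreasing sequence of ideals
    set K : ℕ → Set (Set Q) := fun n =>
      {p | p ∈ P ∧ ∃ G : Finset ℕ, G.Nonempty ∧ (∀ i ∈ G, n ≤ i) ∧ p ⊆ ⋃ i ∈ G, a i}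
      with hKdef
    have haK : ∀ n, a n ∈ K n := by
      intro n
      refine ⟨haP n, {n}, Finset.singleton_nonempty n, by simp, ?_⟩
      simp
    have hK : ∀ n, IsIdealIn P (K n) := by
      intro n
      refine ⟨fun p hp => hp.1, ⟨a n, haK n⟩, ?_, ?_⟩
      · rintro p ⟨hpP, Gp, hGpne, hGp, hpsub⟩ q ⟨hqP, Gq, hGqne, hGq, hqsub⟩
        obtain ⟨i, hi⟩ := hGpne
        refine ⟨p ∪ q, ⟨hcl p hpP q hqP, Gp ∪ Gq, ⟨i, Finset.mem_union_left _ hi⟩, ?_, ?_⟩,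
          Set.subset_union_left, Set.subset_union_right⟩
        · intro j hj
          rcases Finset.mem_union.mp hj with h | h
          · exact hGp j h
          · exact hGq j h
        · apply Set.union_subset
          · refine hpsub.trans ?_
            intro z hz
            rw [Set.mem_iUnion₂] at hz ⊢
            obtain ⟨j, hj, hzj⟩ := hz
            exact ⟨j, Finset.mem_union_left _ hj, hzj⟩
          · refine hqsub.trans ?_
            intro z hz
            rw [Set.mem_iUnion₂] at hz ⊢
            obtain ⟨j, hj, hzj⟩ := hz
            exact ⟨j, Finset.mem_union_right _ hj, hzj⟩
      · rintro z hzP q ⟨hqP, Gq, hGqne, hGq, hqsub⟩ hzq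
        exact ⟨hzP, Gq, hGqne, hGq, Set.Subset.trans hzq hqsub⟩
    have hdec : ∀ n, K (n + 1) ⊆ K n := by
      rintro n p ⟨hpP, G, hGne, hG, hsubU⟩
      exact ⟨hpP, G, hGne, fun i hi => (Nat.le_succ n).trans (hG i hi), hsubU⟩
    have hnotin : ∀ n, a n ∉ K (n + 1) := by
      rintro n ⟨-, G, hGne, hG, hsubU⟩
      have hx : x n ∈ ⋃ i ∈ G, a i := hsubU (hxa n)
      rw [Set.mem_iUnion₂] at hx
      obtain ⟨i, hiG, hxi⟩ := hx
      exact key n i (Nat.lt_of_succ_le (hG i hiG)) hxi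
    have hlt : ∀ n, (⟨K (n + 1), hK (n + 1)⟩ : {I : Set (Set Q) // IsIdealIn P I}) <
        ⟨K n, hK n⟩ := by
      intro n
      rw [Subtype.mk_lt_mk]
      refine lt_of_le_of_ne (hdec n) ?_
      intro h
      exact hnotin n (h ▸ haK n)
    exact (no_descending hwf (fun n => ⟨K n, hK n⟩) hlt).elim
  · -- no infinite antichain ⟹ well-founded
    intro hA
    rw [RelEmbedding.wellFounded_iff_isEmpty]
    constructor
    intro emb
    have hlt : ∀ n, emb (n + 1) < emb n := fun n => emb.map_rel_iff.mpr (Nat.lt_succ_self n)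
    set I : ℕ → Set (Set Q) := fun n => (emb n).1 with hIdef
    have hIdeal : ∀ n, IsIdealIn P (I n) := fun n => (emb n).2
    have hss : ∀ n, I (n + 1) ⊂ I n := fun n => by
      have := hlt n
      rw [← Subtype.coe_lt_coe] at this
      exact this
    choose p hp1 hp2 using fun n => Set.exists_of_ssubset (hss n)
    have mono : ∀ k m, k ≤ m → I m ⊆ I k := by
      intro k m h
      induction m with
      | zero => rw [Nat.le_zero.mp h]
      | succ m ih =>
        rcases Nat.lt_or_ge k (m + 1) with h' | h'
        · exact ((hss m).subset).trans (ih (Nat.lt_succ_iff.mp h'))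
        · rw [Nat.le_antisymm h h']
    have hpP : ∀ n, p n ∈ P := fun n => (hIdeal n).1 (hp1 n)
    have bad : ∀ m n, m < n → ¬ p m ⊆ p n := by
      intro m n hmn hsub
      have h1 : p n ∈ I (m + 1) := mono (m + 1) n hmn (hp1 n)
      exact hp2 m ((hIdeal (m + 1)).2.2.2 (p m) (hpP m) (p n) h1 hsub)
    set Good := {n : ℕ | ∀ m, n < m → ¬ p m ⊂ p n} with hGood
    by_cases hg : Good.Infinite
    · have hinj : Set.InjOn p Good := by
        intro i hi j hj hij
        by_contra hne
        rcases lt_or_gt_of_ne hne with h | h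
        · exact bad i j h (hij ▸ subset_rfl)
        · exact bad j i h (hij ▸ subset_rfl)
      have hanti : IsAntichain (· ⊆ ·) (p '' Good) := by
        rintro _ ⟨i, hi, rfl⟩ _ ⟨j, hj, rfl⟩ hne hsub
        rcases lt_trichotomy i j with h | rfl | h
        · exact bad i j h hsub
        · exact hne rfl
        · exact hj i h (ssubset_iff_subset_ne.mpr ⟨hsub, hne⟩)
      have hfin : (p '' Good).Finite :=
        hA _ (by rintro _ ⟨i, -, rfl⟩; exact hpP i) hanti
      exact hg.image hinj hfin
    · rw [Set.not_infinite] at hg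
      obtain ⟨N, hN⟩ := hg.bddAbove
      have hstep : ∀ n, N < n → ∃ m, n < m ∧ p m ⊂ p n := by
        intro n hn
        by_contra h
        push_neg at h
        have : n ∈ Good := fun m hm => h m hm
        exact absurd (hN this) (not_le.mpr hn)
      set g : ℕ → {n : ℕ // N < n} := fun k =>
        Nat.rec (motive := fun _ => {n : ℕ // N < n}) ⟨N + 1, Nat.lt_succ_self N⟩
          (fun _ prev => ⟨(hstep prev.1 prev.2).choose,
            prev.2.trans (hstep prev.1 prev.2).choose_spec.1⟩) k with hgdef
      have hg1 : ∀ k, p (g (k + 1)).1 ⊂ p (g k).1 := fun k =>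
        (hstep (g k).1 (g k).2).choose_spec.2
      exact no_descending_finGenInit hQ (fun k => p (g k).1)
        (fun k => hP (hpP (g k).1)) hg1
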